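/- Let h = h_{b,c,d} with positive reals b, d and 0 < c < 1, let k ≥ 2, and let A be an n-by-n 0-1 matrix such that w(A) > n·h(n) and every proper submatrix of A is h-sparse. Set x = bc·(log n)^{c−1}, n* = ⌊n/(6k)^{1/x}⌋, α = ⌊n/n*⌋, m* = ⌈n/α^k⌉ and u* = ⌈h(n*)/α⌉, and assume x ≤ 1, n* ≥ 1 and α ≥ k. Then A contains an m*-by-kn* submatrix C (obtained by selecting m* rows of A and k disjoint blocks of n* consecutive columns each) that is (k,u*)-complete. -/

import Mathlib

/-- The weight of a 0-1 matrix: the number of its 1-entries. -/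
def wt {l k : ℕ} (P : Matrix (Fin l) (Fin k) Bool) : ℕ :=
  (Finset.univ.filter (fun p : Fin l × Fin k => P p.1 p.2 = true)).card

/-- The function `h_{b,c,d}(n) = d·2^{b (log₂ n)^c}`. -/
noncomputable def hf (b c d : ℝ) (n : ℕ) : ℝ :=
  d * (2 : ℝ) ^ (b * Real.logb 2 (n : ℝ) ^ c)

/-- A 0-1 matrix is `h`-sparse if every `p × p` submatrix has weight at most `p·h(p)`. -/
def HSparse {m n : ℕ} (h : ℕ → ℝ) (A : Matrix (Fin m) (Fin n) Bool) : Prop :=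
  ∀ (p : ℕ), 1 ≤ p → ∀ (f : Fin p → Fin m) (g : Fin p → Fin n),
    StrictMono f → StrictMono g →
      (wt (fun i j => A (f i) (g j)) : ℝ) ≤ (p : ℝ) * h p

lemma wt_eq_sum_rows {l m : ℕ} (P : Matrix (Fin l) (Fin m) Bool) :
    wt P = ∑ i : Fin l, (Finset.univ.filter (fun j => P i j = true)).card := by
  classical
  unfold wt
  rw [Finset.card_filter, Fintype.sum_prod_type]
  exact Finset.sum_congr rfl (fun i _ => (Finset.card_filter _ _).symm)

lemma wt_transpose {l m : ℕ} (P : Matrix (Fin l) (Fin m) Bool) :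
    wt (fun j i => P i j) = wt P := by
  classical
  unfold wt
  apply Finset.card_bij' (fun (p : Fin m × Fin l) _ => p.swap) (fun (p : Fin l × Fin m) _ => p.swap)
  · intro a ha; simpa using ha
  · intro a ha; simpa using ha
  · intro a _; simp
  · intro a _; simp

lemma hsparse_transpose {l m : ℕ} (h : ℕ → ℝ) (P : Matrix (Fin l) (Fin m) Bool)
    (HS : HSparse h P) : HSparse h (fun j i => P i j) := by
  intro p hp f g hfm hgm
  have := HS p hp g f hgm hfm
  have heq : wt (fun i j => P (g j) (f i)) = wt (fun i j => P (g i) (f j)) :=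
    wt_transpose (fun i j => P (g i) (f j))
  rw [heq]
  exact this

lemma hf_pos {b c d : ℝ} (hd : 0 < d) (p : ℕ) : 0 < hf b c d p := by
  unfold hf
  positivity

lemma hf_mono {b c d : ℝ} (hb : 0 < b) (hd : 0 < d) (hc0 : 0 < c) {p q : ℕ}
    (hp : 1 ≤ p) (hpq : p ≤ q) : hf b c d p ≤ hf b c d q := by
  unfold hf
  have h1 : (1:ℝ) ≤ (p:ℝ) := by exact_mod_cast hp
  have h2 : (p:ℝ) ≤ (q:ℝ) := by exact_mod_cast hpq
  have hlp : 0 ≤ Real.logb 2 p := Real.logb_nonneg one_lt_two h1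
  have hll : Real.logb 2 p ≤ Real.logb 2 q :=
    Real.logb_le_logb_of_le one_lt_two (by linarith) h2
  have hr : Real.logb 2 (p:ℝ) ^ c ≤ Real.logb 2 (q:ℝ) ^ c :=
    Real.rpow_le_rpow hlp hll (le_of_lt hc0)
  have : (2:ℝ) ^ (b * Real.logb 2 (p:ℝ) ^ c) ≤ (2:ℝ) ^ (b * Real.logb 2 (q:ℝ) ^ c) := by
    apply (Real.rpow_le_rpow_left_iff one_lt_two).mpr
    nlinarith
  nlinarith [Real.rpow_pos_of_pos (zero_lt_two : (0:ℝ) < 2) (b * Real.logb 2 (p:ℝ) ^ c)]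

lemma choose_lb (k : ℕ) (hk : 1 ≤ k) : ∀ (g : ℕ), g - (k-1) ≤ g.choose k := by
  intro g
  induction g with
  | zero => simp
  | succ g ih =>
    rcases Nat.lt_or_ge (g+1) k with hlt | hge
    · have h0 : g + 1 - (k - 1) = 0 := by omega
      rw [h0]; exact Nat.zero_le _
    · obtain ⟨k1, rfl⟩ : ∃ k1, k = k1 + 1 := ⟨k-1, by omega⟩
      rw [Nat.choose_succ_succ']
      have h3 : 1 ≤ g.choose k1 := Nat.choose_pos (by omega)
      have h4 : g - k1 ≤ g.choose (k1+1) := by simpa using ih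
      omega

lemma rect_core {r m : ℕ} (h : ℕ → ℝ) (M : Matrix (Fin r) (Fin m) Bool)
    (HS : HSparse h M) (h1 : 1 ≤ r) (hrm : r ≤ m) (hpos : 0 ≤ h r) :
    (wt M : ℝ) ≤ ((m + r : ℕ) : ℝ) * h r := by
  classical
  set J := (m + r - 1) / r with hJ
  have hr0 : 0 < r := h1
  have hm0 : 0 < m := lt_of_lt_of_le hr0 hrm
  let e : ℕ → Fin r → Fin m := fun j a =>
    ⟨min (j*r) (m-r) + a, by
      have h1' : min (j*r) (m-r) ≤ m - r := min_le_right _ _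
      have := a.isLt; omega⟩
  have emono : ∀ j, StrictMono (e j) := by
    intro j a b hab
    have : (a : ℕ) < (b : ℕ) := hab
    simp only [e, Fin.mk_lt_mk]
    omega
  have cover : (Finset.univ.filter (fun p : Fin r × Fin m => M p.1 p.2 = true)) ⊆
      (Finset.range J).biUnion (fun j =>
        (Finset.univ.filter (fun q : Fin r × Fin r => M q.1 (e j q.2) = true)).image
          (fun q => (q.1, e j q.2))) := by
    intro p hp
    simp only [Finset.mem_filter, Finset.mem_univ, true_and] at hp
    have hcm : (p.2 : ℕ) < m := p.2.isLt
    set c := (p.2 : ℕ) with hc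
    set j := c / r with hj'
    have hdm := Nat.div_add_mod c r
    have hmod := Nat.mod_lt c hr0
    have hjJ : j < J := by
      have h2 : c / r ≤ (m-1)/r := Nat.div_le_div_right (by omega)
      have h3 : (m-1)/r + 1 = (m-1+r)/r := (Nat.add_div_right _ hr0).symm
      have h4 : m - 1 + r = m + r - 1 := by omega
      rw [h4] at h3
      have h5 : J = (m-1)/r + 1 := by rw [hJ, ← h3]
      omega
    have hjr : j * r ≤ c := by
      rw [hj']; exact Nat.div_mul_le_self c r
    have hsj : min (j*r) (m-r) ≤ c := le_trans (min_le_left _ _) hjr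
    have hjr2 : j * r = r * (c/r) := by rw [hj']; ring
    have hcs : c < min (j*r) (m-r) + r := by
      rcases le_or_gt (j*r) (m-r) with hle | hlt
      · rw [min_eq_left hle]; omega
      · rw [min_eq_right (le_of_lt hlt)]; omega
    refine Finset.mem_biUnion.mpr ⟨j, Finset.mem_range.mpr hjJ, ?_⟩
    have hfin : e j ⟨c - min (j*r) (m-r), by omega⟩ = p.2 := by
      apply Fin.ext
      simp only [e]
      have := Nat.add_sub_cancel' hsj
      rw [this, hc]
    refine Finset.mem_image.mpr ⟨(p.1, ⟨c - min (j*r) (m-r), by omega⟩), ?_, ?_⟩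
    · simp only [Finset.mem_filter, Finset.mem_univ, true_and]
      rw [hfin]; exact hp
    · exact Prod.ext rfl hfin
  have hwt : wt M ≤ ∑ j ∈ Finset.range J,
      (Finset.univ.filter (fun q : Fin r × Fin r => M q.1 (e j q.2) = true)).card := by
    calc wt M ≤ ((Finset.range J).biUnion (fun j =>
        (Finset.univ.filter (fun q : Fin r × Fin r => M q.1 (e j q.2) = true)).image
          (fun q => (q.1, e j q.2)))).card := Finset.card_le_card cover
    _ ≤ ∑ j ∈ Finset.range J, ((Finset.univ.filter
          (fun q : Fin r × Fin r => M q.1 (e j q.2) = true)).image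
          (fun q => (q.1, e j q.2))).card := Finset.card_biUnion_le
    _ ≤ _ := Finset.sum_le_sum (fun j _ => Finset.card_image_le)
  have hchunk : ∀ j, (((Finset.univ.filter
      (fun q : Fin r × Fin r => M q.1 (e j q.2) = true)).card : ℕ) : ℝ) ≤ r * h r := by
    intro j
    have := HS r h1 id (e j) strictMono_id (emono j)
    simpa [wt] using this
  have hJr : (J * r : ℕ) ≤ m + r := by
    have h6 := Nat.div_mul_le_self (m+r-1) r
    rw [← hJ] at h6
    omega
  calc (wt M : ℝ) ≤ ((∑ j ∈ Finset.range J,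
      (Finset.univ.filter (fun q : Fin r × Fin r => M q.1 (e j q.2) = true)).card : ℕ) : ℝ) := by
        exact_mod_cast hwt
  _ = ∑ j ∈ Finset.range J, (((Finset.univ.filter
        (fun q : Fin r × Fin r => M q.1 (e j q.2) = true)).card : ℕ) : ℝ) := by push_cast; ring
  _ ≤ ∑ _j ∈ Finset.range J, (r : ℝ) * h r := Finset.sum_le_sum (fun j _ => hchunk j)
  _ = (J : ℝ) * ((r:ℝ) * h r) := by rw [Finset.sum_const, Finset.card_range]; simp
  _ = ((J * r : ℕ) : ℝ) * h r := by push_cast; ring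
  _ ≤ ((m + r : ℕ) : ℝ) * h r := by
      apply mul_le_mul_of_nonneg_right _ hpos
      exact_mod_cast hJr

lemma rect {r m : ℕ} (h : ℕ → ℝ) (M : Matrix (Fin r) (Fin m) Bool)
    (HS : HSparse h M) (hr : 1 ≤ r) (hm : 1 ≤ m) (hpos : ∀ p, 0 ≤ h p) :
    (wt M : ℝ) ≤ ((r + m : ℕ) : ℝ) * h (min r m) := by
  rcases le_total r m with hle | hle
  · rw [min_eq_left hle]
    have := rect_core h M HS hr hle (hpos r)
    calc (wt M : ℝ) ≤ ((m + r : ℕ):ℝ) * h r := this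
    _ = ((r + m : ℕ):ℝ) * h r := by push_cast; ring
  · rw [min_eq_right hle]
    have HT := hsparse_transpose h M HS
    have := rect_core h (fun j i => M i j) HT hm hle (hpos m)
    rw [wt_transpose] at this
    exact this

/-- count of 1-entries of row `i` among columns `s, s+1, ..., s+m-1` (out-of-range = 0). -/
def scntA {n : ℕ} (A : Matrix (Fin n) (Fin n) Bool) (m s : ℕ) (i : Fin n) : ℕ :=
  (Finset.univ.filter (fun cc : Fin m =>
    (if h : s + (cc : ℕ) < n then A i ⟨s + (cc : ℕ), h⟩ else false) = true)).card

lemma scnt_eq {n : ℕ} (A : Matrix (Fin n) (Fin n) Bool) {m s : ℕ} (i : Fin n)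
    (hmn : s + m ≤ n) (F : Fin m → Fin n) (hF : ∀ cc : Fin m, (F cc : ℕ) = s + (cc : ℕ)) :
    scntA A m s i = (Finset.univ.filter (fun cc : Fin m => A i (F cc) = true)).card := by
  unfold scntA
  congr 1
  apply Finset.filter_congr
  intro cc _
  have hlt : s + (cc : ℕ) < n := by have := cc.isLt; omega
  rw [dif_pos hlt]
  have : F cc = ⟨s + (cc : ℕ), hlt⟩ := Fin.ext (hF cc)
  rw [this]

lemma key6k (b c d : ℝ) (hb : 0 < b) (hd : 0 < d) (hc0 : 0 < c) (hc1 : c < 1)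
    (k n n' : ℕ) (hk : 2 ≤ k) (hn2 : 2 ≤ n) (hn'1 : 1 ≤ n') (hn'n : n' ≤ n) (x : ℝ)
    (hxdef : x = b * c * Real.logb 2 (n : ℝ) ^ (c - 1))
    (hfloor : (n' : ℝ) ≤ (n : ℝ) / (6 * (k : ℝ)) ^ (1 / x)) :
    6 * (k:ℝ) * hf b c d n' ≤ hf b c d n := by
  have hnpos : (0:ℝ) < (n:ℝ) := by
    have : (2:ℝ) ≤ (n:ℝ) := by exact_mod_cast hn2
    linarith
  have hn'pos : (0:ℝ) < (n':ℝ) := by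
    have : (1:ℝ) ≤ (n':ℝ) := by exact_mod_cast hn'1
    linarith
  set L := Real.logb 2 (n:ℝ) with hL
  set l := Real.logb 2 (n':ℝ) with hl
  have hL1 : 1 ≤ L := by
    rw [hL]
    have : (2:ℝ)^(1:ℝ) ≤ (n:ℝ) := by rw [Real.rpow_one]; exact_mod_cast hn2
    exact (Real.le_logb_iff_rpow_le one_lt_two hnpos).mpr this
  have hL0 : 0 < L := by linarith
  have hl0 : 0 ≤ l := Real.logb_nonneg one_lt_two (by exact_mod_cast hn'1)
  have hlL : l ≤ L := Real.logb_le_logb_of_le one_lt_two hn'pos (by exact_mod_cast hn'n)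
  have hx0 : 0 < x := by
    rw [hxdef]
    have : (0:ℝ) < L ^ (c-1) := Real.rpow_pos_of_pos hL0 _
    positivity
  have h6kpos : (0:ℝ) < 6 * (k:ℝ) := by
    have : (2:ℝ) ≤ (k:ℝ) := by exact_mod_cast hk
    linarith
  -- Step 1 : l ≤ L - (1/x) * logb 2 (6k)
  have hstep1 : l ≤ L - (1/x) * Real.logb 2 (6*(k:ℝ)) := by
    have h1 : (0:ℝ) < (6*(k:ℝ))^(1/x) := Real.rpow_pos_of_pos h6kpos _
    have h2 : l ≤ Real.logb 2 ((n:ℝ) / (6*(k:ℝ))^(1/x)) :=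
      Real.logb_le_logb_of_le one_lt_two hn'pos hfloor
    have h3 : Real.logb 2 ((n:ℝ) / (6*(k:ℝ))^(1/x))
        = L - Real.logb 2 ((6*(k:ℝ))^(1/x)) := by
      rw [Real.logb_div (ne_of_gt hnpos) (ne_of_gt h1)]
    have h4 : Real.logb 2 ((6*(k:ℝ))^(1/x)) = (1/x) * Real.logb 2 (6*(k:ℝ)) :=
      Real.logb_rpow_eq_mul_logb_of_pos h6kpos
    rw [h3, h4] at h2
    exact h2
  -- Step 2 : logb 2 (6k) ≤ x * (L - l)
  have hstep2 : Real.logb 2 (6*(k:ℝ)) ≤ x * (L - l) := by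
    have h5 : (1/x) * Real.logb 2 (6*(k:ℝ)) ≤ L - l := by linarith
    have h6 := mul_le_mul_of_nonneg_left h5 (le_of_lt hx0)
    have h7 : x * ((1/x) * Real.logb 2 (6*(k:ℝ))) = Real.logb 2 (6*(k:ℝ)) := by
      field_simp
    linarith
  -- Step 3 : concavity
  have hconc : x * (L - l) ≤ b * L ^ c - b * l ^ c := by
    have hu0 : 0 ≤ l / L := by positivity
    have amgm := Real.geom_mean_le_arith_mean2_weighted (le_of_lt hc0)
      (by linarith : (0:ℝ) ≤ 1 - c) hu0 (zero_le_one) (by ring)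
    simp only [Real.one_rpow, mul_one] at amgm
    -- amgm : (l/L)^c ≤ c * (l/L) + (1-c)
    have hdiv : (l/L) ^ c = l ^ c / L ^ c := Real.div_rpow hl0 (le_of_lt hL0) c
    have hLc : (0:ℝ) < L ^ c := Real.rpow_pos_of_pos hL0 _
    have h8 : l ^ c ≤ (c * (l/L) + (1-c)) * L ^ c := by
      have := mul_le_mul_of_nonneg_right amgm (le_of_lt hLc)
      rw [hdiv, div_mul_cancel₀] at this
      · exact this
      · exact ne_of_gt hLc
    have hLc1 : L ^ (c-1) = L ^ c / L := by
      rw [Real.rpow_sub hL0, Real.rpow_one]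
    have h9 : (c * (l/L) + (1-c)) * L ^ c = c * l * L^(c-1) + (1-c) * L^c := by
      rw [hLc1]
      field_simp
    have h10 : l ^ c ≤ c * l * L^(c-1) + (1-c) * L^c := by
      rw [← h9]; exact h8
    have hLLc : L * L ^ (c-1) = L ^ c := by
      rw [hLc1]
      field_simp
    have h12 := mul_le_mul_of_nonneg_left h10 (le_of_lt hb)
    rw [hxdef]
    calc b * c * L ^ (c-1) * (L - l) = b*c*(L*L^(c-1)) - b*c*l*L^(c-1) := by ring
    _ = b*c*L^c - b*c*l*L^(c-1) := by rw [hLLc]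
    _ ≤ b * L ^ c - b * l ^ c := by nlinarith [h12]
  -- Step 4 : assemble
  have hexp : b * l ^ c + Real.logb 2 (6*(k:ℝ)) ≤ b * L ^ c := by linarith
  have hmono := (Real.rpow_le_rpow_left_iff (one_lt_two : (1:ℝ) < 2)).mpr hexp
  rw [Real.rpow_add (zero_lt_two)] at hmono
  have h2logb : (2:ℝ) ^ Real.logb 2 (6*(k:ℝ)) = 6*(k:ℝ) :=
    Real.rpow_logb zero_lt_two (by norm_num) h6kpos
  rw [h2logb] at hmono
  unfold hf
  rw [← hL, ← hl]
  calc 6*(k:ℝ) * (d * (2:ℝ) ^ (b * l ^ c)) = d * ((2:ℝ) ^ (b * l ^ c) * (6*(k:ℝ))) := by ring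
  _ ≤ d * (2:ℝ) ^ (b * L ^ c) := by
      apply mul_le_mul_of_nonneg_left hmono (le_of_lt hd)

set_option maxHeartbeats 1000000 in
/-- Let `h = h_{b,c,d}`, `k ≥ 2`, and let `A` be an `n × n` 0-1 matrix
with `w(A) > n·h(n)` all of whose proper submatrices are `h`-sparse. With
`x = bc(log₂ n)^{c-1}`, `n* = ⌊n/(6k)^{1/x}⌋`, `α = ⌊n/n*⌋`, `m* = ⌈n/α^k⌉`,
`u* = ⌈h(n*)/α⌉`, and assuming `x ≤ 1`, `n* ≥ 1`, `α ≥ k`, the matrix `A` contains an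
`m* × kn*` submatrix `C`, obtained by selecting `m*` rows and `k` disjoint blocks of
`n*` consecutive columns, that is `(k,u*)`-complete. -/
theorem statement12 (b c d : ℝ) (hb : 0 < b) (hd : 0 < d) (hc0 : 0 < c) (hc1 : c < 1)
    (k n : ℕ) (hk : 2 ≤ k)
    (A : Matrix (Fin n) (Fin n) Bool)
    (hw : (n : ℝ) * hf b c d n < (wt A : ℝ))
    (hsp : ∀ (r₁ r₂ : ℕ) (f : Fin r₁ → Fin n) (g : Fin r₂ → Fin n),
      StrictMono f → StrictMono g → (r₁ < n ∨ r₂ < n) →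
        HSparse (hf b c d) (fun i j => A (f i) (g j)))
    (x : ℝ) (hxdef : x = b * c * Real.logb 2 (n : ℝ) ^ (c - 1))
    (n' : ℕ) (hn'def : n' = ⌊(n : ℝ) / (6 * (k : ℝ)) ^ (1 / x)⌋₊)
    (α : ℕ) (hαdef : α = n / n')
    (m' : ℕ) (hm'def : m' = ⌈(n : ℝ) / (α : ℝ) ^ k⌉₊)
    (u' : ℕ) (hu'def : u' = ⌈hf b c d n' / (α : ℝ)⌉₊)
    (hx1 : x ≤ 1) (hn'1 : 1 ≤ n') (hαk : k ≤ α) :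
    ∃ f : Fin m' → Fin n, StrictMono f ∧
      ∃ t : Fin k → ℕ, ∃ ht : ∀ j : Fin k, t j + n' ≤ n,
        (∀ j₁ j₂ : Fin k, j₁ < j₂ → t j₁ + n' ≤ t j₂) ∧
        ∀ (i : Fin m') (j : Fin k),
          u' ≤ (Finset.univ.filter (fun cc : Fin n' =>
            A (f i) ⟨t j + (cc : ℕ), by have := ht j; have := cc.isLt; omega⟩ = true)).card := by
  classical
  -- basic numeric facts
  have hn'pos : 0 < n' := hn'1
  have hαk2 : 2 ≤ α := le_trans hk hαk
  have h2n' : 2 * n' ≤ n := by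
    rw [hαdef] at hαk2
    exact (Nat.le_div_iff_mul_le hn'pos).mp hαk2
  have hn2 : 2 ≤ n := by omega
  have hn'n : n' < n := by omega
  have hαn' : α * n' ≤ n := by rw [hαdef]; exact Nat.div_mul_le_self n n'
  have hαpos : 0 < α := by omega
  have hnpos : 0 < n := by omega
  have hHspos : (0:ℝ) < hf b c d n' := hf_pos hd n'
  have hfloor : (n' : ℝ) ≤ (n:ℝ)/(6*(k:ℝ))^(1/x) := by
    rw [hn'def]
    exact Nat.floor_le (by positivity)
  have hkey : 6*(k:ℝ) * hf b c d n' ≤ hf b c d n :=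
    key6k b c d hb hd hc0 hc1 k n n' hk hn2 hn'1 (by omega) x hxdef hfloor
  have hu'pos : 1 ≤ u' := by
    rw [hu'def]
    exact Nat.ceil_pos.mpr (by positivity)
  -- the cover of the weight by strips
  have hcover : wt A ≤ (∑ j ∈ Finset.range α, ∑ i : Fin n, scntA A n' (j*n') i)
      + ∑ i : Fin n, scntA A (n - α*n') (α*n') i := by
    classical
    rw [wt_eq_sum_rows]
    have hrow : ∀ i : Fin n,
        (Finset.univ.filter (fun ccol : Fin n => A i ccol = true)).card ≤
          (∑ j ∈ Finset.range α, scntA A n' (j*n') i) + scntA A (n - α*n') (α*n') i := by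
      intro i
      have hcard : (Finset.univ.filter (fun ccol : Fin n => A i ccol = true)).card
          = ((Finset.univ.filter (fun ccol : Fin n => A i ccol = true)).image Fin.val).card :=
        (Finset.card_image_of_injective _ Fin.val_injective).symm
      have hsub : ((Finset.univ.filter (fun ccol : Fin n => A i ccol = true)).image Fin.val) ⊆
          ((Finset.range α).biUnion (fun j =>
            (Finset.univ.filter (fun cc : Fin n' =>
              (if h : j*n' + (cc:ℕ) < n then A i ⟨j*n' + (cc:ℕ), h⟩ else false) = true)).image
              (fun cc : Fin n' => j*n' + (cc:ℕ))))
          ∪ ((Finset.univ.filter (fun cc : Fin (n - α*n') =>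
              (if h : α*n' + (cc:ℕ) < n then A i ⟨α*n' + (cc:ℕ), h⟩ else false) = true)).image
              (fun cc : Fin (n - α*n') => α*n' + (cc:ℕ))) := by
        intro v hv
        obtain ⟨ccol, hccol, rfl⟩ := Finset.mem_image.mp hv
        simp only [Finset.mem_filter, Finset.mem_univ, true_and] at hccol
        have hvn : (ccol : ℕ) < n := ccol.isLt
        rcases Nat.lt_or_ge (ccol : ℕ) (α * n') with hlt | hge
        · apply Finset.mem_union_left
          set v := (ccol : ℕ)
          have hj : v / n' < α := (Nat.div_lt_iff_lt_mul hn'pos).mpr hlt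
          have hdm : n' * (v / n') + v % n' = v := Nat.div_add_mod v n'
          have hmod : v % n' < n' := Nat.mod_lt v hn'pos
          have hcomm : (v / n') * n' = n' * (v / n') := mul_comm _ _
          refine Finset.mem_biUnion.mpr ⟨v / n', Finset.mem_range.mpr hj, ?_⟩
          refine Finset.mem_image.mpr ⟨⟨v % n', hmod⟩, ?_, by simp only [Fin.val_mk]; omega⟩
          simp only [Finset.mem_filter, Finset.mem_univ, true_and]
          have hlt2 : (v / n') * n' + (v % n') < n := by omega
          rw [dif_pos hlt2]
          have : (⟨(v / n') * n' + (v % n'), hlt2⟩ : Fin n) = ccol := Fin.ext (by simp only [Fin.val_mk]; omega)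
          rw [this]
          exact hccol
        · apply Finset.mem_union_right
          set v := (ccol : ℕ)
          refine Finset.mem_image.mpr ⟨⟨v - α*n', by omega⟩, ?_, by simp only [Fin.val_mk]; omega⟩
          simp only [Finset.mem_filter, Finset.mem_univ, true_and]
          have hlt2 : α*n' + (v - α*n') < n := by omega
          rw [dif_pos hlt2]
          have : (⟨α*n' + (v - α*n'), hlt2⟩ : Fin n) = ccol := Fin.ext (by simp only [Fin.val_mk]; omega)
          rw [this]
          exact hccol
      calc (Finset.univ.filter (fun ccol : Fin n => A i ccol = true)).card
          = _ := hcard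
      _ ≤ _ := Finset.card_le_card hsub
      _ ≤ _ := Finset.card_union_le _ _
      _ ≤ (∑ j ∈ Finset.range α, ((Finset.univ.filter (fun cc : Fin n' =>
              (if h : j*n' + (cc:ℕ) < n then A i ⟨j*n' + (cc:ℕ), h⟩ else false) = true)).image
              (fun cc : Fin n' => j*n' + (cc:ℕ))).card)
          + ((Finset.univ.filter (fun cc : Fin (n - α*n') =>
              (if h : α*n' + (cc:ℕ) < n then A i ⟨α*n' + (cc:ℕ), h⟩ else false) = true)).image
              (fun cc : Fin (n - α*n') => α*n' + (cc:ℕ))).card := by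
            exact Nat.add_le_add_right Finset.card_biUnion_le _
      _ ≤ (∑ j ∈ Finset.range α, scntA A n' (j*n') i) + scntA A (n - α*n') (α*n') i := by
            apply Nat.add_le_add
            · exact Finset.sum_le_sum (fun j _ => Finset.card_image_le)
            · exact Finset.card_image_le
    calc ∑ i : Fin n, (Finset.univ.filter (fun ccol => A i ccol = true)).card
        ≤ ∑ i : Fin n, ((∑ j ∈ Finset.range α, scntA A n' (j*n') i)
            + scntA A (n - α*n') (α*n') i) := Finset.sum_le_sum (fun i _ => hrow i)
    _ = (∑ i : Fin n, ∑ j ∈ Finset.range α, scntA A n' (j*n') i)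
        + ∑ i : Fin n, scntA A (n - α*n') (α*n') i := Finset.sum_add_distrib
    _ = (∑ j ∈ Finset.range α, ∑ i : Fin n, scntA A n' (j*n') i)
        + ∑ i : Fin n, scntA A (n - α*n') (α*n') i := by rw [Finset.sum_comm]
  -- per-strip bound
  have hstrip : ∀ j, j < α →
      ((∑ i : Fin n, scntA A n' (j*n') i : ℕ) : ℝ) ≤
        (((Finset.univ.filter (fun i : Fin n => u' ≤ scntA A n' (j*n') i)).card : ℝ) + (n':ℝ))
            * hf b c d n'
          + (n:ℝ) * ((u' - 1 : ℕ) : ℝ) := by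
    classical
    intro j hj
    have hjn : j*n' + n' ≤ n := by
      have h1 : (j+1)*n' ≤ α*n' := Nat.mul_le_mul_right n' (by omega)
      have h2 : (j+1)*n' = j*n' + n' := by ring
      omega
    rw [← Finset.sum_filter_add_sum_filter_not Finset.univ
        (fun i : Fin n => u' ≤ scntA A n' (j*n') i) (fun i => scntA A n' (j*n') i)]
    have hbad : ∑ i ∈ Finset.univ.filter (fun i : Fin n => ¬ u' ≤ scntA A n' (j*n') i),
        scntA A n' (j*n') i ≤ n * (u'-1) := by
      calc ∑ i ∈ Finset.univ.filter (fun i : Fin n => ¬ u' ≤ scntA A n' (j*n') i),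
            scntA A n' (j*n') i
          ≤ (Finset.univ.filter (fun i : Fin n => ¬ u' ≤ scntA A n' (j*n') i)).card • (u'-1) := by
            apply Finset.sum_le_card_nsmul
            intro i hi
            simp only [Finset.mem_filter] at hi
            omega
      _ = (Finset.univ.filter (fun i : Fin n => ¬ u' ≤ scntA A n' (j*n') i)).card * (u'-1) := by
            rw [smul_eq_mul]
      _ ≤ n * (u'-1) := by
            apply Nat.mul_le_mul_right
            calc _ ≤ (Finset.univ : Finset (Fin n)).card := Finset.card_filter_le _ _
            _ = n := by simp
    have hgood : ((∑ i ∈ Finset.univ.filter (fun i : Fin n => u' ≤ scntA A n' (j*n') i),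
        scntA A n' (j*n') i : ℕ) : ℝ) ≤
        (((Finset.univ.filter (fun i : Fin n => u' ≤ scntA A n' (j*n') i)).card : ℝ) + (n':ℝ))
          * hf b c d n' := by
      set S := Finset.univ.filter (fun i : Fin n => u' ≤ scntA A n' (j*n') i) with hS
      rcases Nat.eq_zero_or_pos S.card with h0 | hpos'
      · rw [Finset.card_eq_zero] at h0
        rw [h0]
        simp only [Finset.sum_empty, Nat.cast_zero, h0, Finset.card_empty]
        have h1 : (0:ℝ) ≤ (n':ℝ) := by positivity
        nlinarith [hf_pos (b:=b) (c:=c) hd n']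
      · set r := S.card with hr
        have hiso : StrictMono (fun a : Fin r => ((S.orderIsoOfFin hr.symm a : Fin n))) := by
          intro a b' hab
          have := (S.orderIsoOfFin hr.symm).strictMono hab
          exact this
        set ge : Fin n' → Fin n := fun cc => ⟨j*n' + (cc:ℕ), by have := cc.isLt; omega⟩ with hge
        have hgm : StrictMono ge := by
          intro a b' hab
          have : (a:ℕ) < (b':ℕ) := hab
          simp only [hge, Fin.mk_lt_mk]
          omega
        have HS2 := hsp r n' (fun a => (S.orderIsoOfFin hr.symm a : Fin n)) ge hiso hgm
          (Or.inr hn'n)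
        have hrect := rect (hf b c d)
          (fun a cc => A ((S.orderIsoOfFin hr.symm a : Fin n)) (ge cc)) HS2 hpos' hn'pos
          (fun p => (hf_pos hd p).le)
        have hwtM : wt (fun (a : Fin r) (cc : Fin n') =>
            A ((S.orderIsoOfFin hr.symm a : Fin n)) (ge cc)) = ∑ i ∈ S, scntA A n' (j*n') i := by
          refine (wt_eq_sum_rows _).trans ?_
          have h1 : ∀ a : Fin r,
              (Finset.univ.filter (fun cc : Fin n' =>
                A ((S.orderIsoOfFin hr.symm a : Fin n)) (ge cc) = true)).card
              = scntA A n' (j*n') ((S.orderIsoOfFin hr.symm a : Fin n)) := by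
            intro a
            exact (scnt_eq A _ hjn ge (fun cc => rfl)).symm
          rw [Finset.sum_congr rfl (fun a _ => h1 a)]
          rw [← Finset.sum_coe_sort S (fun i => scntA A n' (j*n') i)]
          exact Equiv.sum_comp (S.orderIsoOfFin hr.symm).toEquiv
            (fun s : {i // i ∈ S} => scntA A n' (j*n') (s : Fin n))
        rw [← hwtM]
        have hmin : hf b c d (min r n') ≤ hf b c d n' :=
          hf_mono hb hd hc0 (by omega : 1 ≤ min r n') (min_le_right _ _)
        calc (↑(wt (fun (a : Fin r) (cc : Fin n') =>
                A ((S.orderIsoOfFin hr.symm a : Fin n)) (ge cc))) : ℝ)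
            ≤ ((r + n' : ℕ) : ℝ) * hf b c d (min r n') := hrect
        _ ≤ ((r + n' : ℕ) : ℝ) * hf b c d n' := by
              apply mul_le_mul_of_nonneg_left hmin (by positivity)
        _ = ((r:ℝ) + (n':ℝ)) * hf b c d n' := by push_cast; ring
    push_cast
    push_cast at hgood
    have hbadR : ((∑ i ∈ Finset.univ.filter (fun i : Fin n => ¬ u' ≤ scntA A n' (j*n') i),
        scntA A n' (j*n') i : ℕ) : ℝ) ≤ (n:ℝ) * ((u' - 1 : ℕ) : ℝ) := by
      calc ((∑ i ∈ Finset.univ.filter (fun i : Fin n => ¬ u' ≤ scntA A n' (j*n') i),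
          scntA A n' (j*n') i : ℕ) : ℝ) ≤ ((n * (u'-1) : ℕ) : ℝ) := by exact_mod_cast hbad
      _ = (n:ℝ) * ((u' - 1 : ℕ) : ℝ) := by push_cast; ring
    push_cast at hbadR
    linarith
  -- leftover bound
  have hleft : ((∑ i : Fin n, scntA A (n - α*n') (α*n') i : ℕ) : ℝ)
      ≤ ((n:ℝ) + (n':ℝ)) * hf b c d n' := by
    classical
    have hw0n' : n - α*n' < n' := by
      have h1 : n' * (n / n') + n % n' = n := Nat.div_add_mod n n'
      have h2 : n % n' < n' := Nat.mod_lt n hn'pos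
      have h3 : α * n' = n' * (n / n') := by rw [hαdef]; ring
      omega
    rcases Nat.eq_zero_or_pos (n - α*n') with h0 | hw0
    · rw [h0]
      have : ∀ i : Fin n, scntA A 0 (α*n') i = 0 := by
        intro i
        unfold scntA
        simp
      rw [Finset.sum_congr rfl (fun i _ => this i)]
      simp only [Finset.sum_const_zero, Nat.cast_zero]
      have h1 : (0:ℝ) ≤ (n:ℝ) + (n':ℝ) := by positivity
      nlinarith [hf_pos (b:=b) (c:=c) hd n']
    · set w0 := n - α*n' with hw0def
      set ge : Fin w0 → Fin n := fun cc => ⟨α*n' + (cc:ℕ), by have := cc.isLt; omega⟩ with hge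
      have hgm : StrictMono ge := by
        intro a b' hab
        have : (a:ℕ) < (b':ℕ) := hab
        simp only [hge, Fin.mk_lt_mk]
        omega
      have HS2 := hsp n w0 id ge strictMono_id hgm (Or.inr (by omega))
      have hrect := rect (hf b c d) (fun i cc => A (id i) (ge cc)) HS2 hnpos hw0
        (fun p => (hf_pos hd p).le)
      have hwtM : wt (fun (i : Fin n) (cc : Fin w0) => A (id i) (ge cc))
          = ∑ i : Fin n, scntA A w0 (α*n') i := by
        refine (wt_eq_sum_rows _).trans ?_
        apply Finset.sum_congr rfl
        intro i _
        exact (scnt_eq A _ (by omega) ge (fun cc => rfl)).symm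
      rw [← hwtM]
      have hmin : hf b c d (min n w0) ≤ hf b c d n' := by
        rw [min_eq_right (by omega : w0 ≤ n)]
        exact hf_mono hb hd hc0 hw0 (by omega)
      calc (↑(wt (fun (i : Fin n) (cc : Fin w0) => A (id i) (ge cc))) : ℝ)
          ≤ ((n + w0 : ℕ) : ℝ) * hf b c d (min n w0) := hrect
      _ ≤ ((n + w0 : ℕ) : ℝ) * hf b c d n' := mul_le_mul_of_nonneg_left hmin (by positivity)
      _ ≤ ((n:ℝ) + (n':ℝ)) * hf b c d n' := by
          apply mul_le_mul_of_nonneg_right _ (hf_pos (b:=b) (c:=c) hd n').le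
          push_cast
          have : (w0:ℝ) ≤ (n':ℝ) := by exact_mod_cast le_of_lt hw0n'
          linarith
  -- E
  have hEnat : k*n + n + 1 ≤ ∑ j ∈ Finset.range α, (Finset.univ.filter
      (fun i : Fin n => u' ≤ scntA A n' (j*n') i)).card := by
    classical
    have hHspos : (0:ℝ) < hf b c d n' := hf_pos hd n'
    have hα0 : (0:ℝ) < (α:ℝ) := by exact_mod_cast hαpos
    have hcu : (α:ℝ) * ((u' - 1 : ℕ) : ℝ) ≤ hf b c d n' := by
      have h1 : ((u':ℕ):ℝ) < hf b c d n' / (α:ℝ) + 1 := by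
        rw [hu'def]
        exact Nat.ceil_lt_add_one (by positivity)
      have h2 : ((u'-1 : ℕ):ℝ) = (u':ℝ) - 1 := by
        push_cast [hu'pos]
        ring
      rw [h2]
      have h3 : ((u':ℝ) - 1) * (α:ℝ) < (hf b c d n' / (α:ℝ)) * (α:ℝ) := by
        apply mul_lt_mul_of_pos_right _ hα0
        linarith
      rw [div_mul_cancel₀ _ (ne_of_gt hα0)] at h3
      linarith
    set E := ∑ j ∈ Finset.range α, (Finset.univ.filter
        (fun i : Fin n => u' ≤ scntA A n' (j*n') i)).card with hE
    have hsumE : ∑ j ∈ Finset.range α, ((Finset.univ.filter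
        (fun i : Fin n => u' ≤ scntA A n' (j*n') i)).card : ℝ) = (E:ℝ) := by
      rw [hE]
      push_cast
      rfl
    have hglobal : ((wt A : ℕ) : ℝ) ≤ ((E : ℝ) + 4*(n:ℝ)) * hf b c d n' := by
      have step1 : ((wt A : ℕ) : ℝ) ≤
          (∑ j ∈ Finset.range α, ((∑ i : Fin n, scntA A n' (j*n') i : ℕ) : ℝ))
          + ((∑ i : Fin n, scntA A (n - α*n') (α*n') i : ℕ) : ℝ) := by
        exact_mod_cast hcover
      have step2 : (∑ j ∈ Finset.range α, ((∑ i : Fin n, scntA A n' (j*n') i : ℕ) : ℝ))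
          ≤ ∑ j ∈ Finset.range α,
            ((((Finset.univ.filter (fun i : Fin n => u' ≤ scntA A n' (j*n') i)).card : ℝ)
                + (n':ℝ)) * hf b c d n' + (n:ℝ) * ((u' - 1 : ℕ) : ℝ)) :=
        Finset.sum_le_sum (fun j hjr => hstrip j (Finset.mem_range.mp hjr))
      have step3 : ∑ j ∈ Finset.range α,
            ((((Finset.univ.filter (fun i : Fin n => u' ≤ scntA A n' (j*n') i)).card : ℝ)
                + (n':ℝ)) * hf b c d n' + (n:ℝ) * ((u' - 1 : ℕ) : ℝ))
          = ((E:ℝ) + (α:ℝ)*(n':ℝ)) * hf b c d n'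
            + (n:ℝ) * ((α:ℝ) * ((u' - 1 : ℕ) : ℝ)) := by
        rw [Finset.sum_add_distrib, ← Finset.sum_mul, Finset.sum_add_distrib, hsumE,
          Finset.sum_const, Finset.card_range, Finset.sum_const, Finset.card_range]
        push_cast
        ring
      have hαn'R : (α:ℝ)*(n':ℝ) ≤ (n:ℝ) := by exact_mod_cast hαn'
      have hn'nR : (n':ℝ) ≤ (n:ℝ) := by
        have : n' ≤ n := by omega
        exact_mod_cast this
      have hnn : (0:ℝ) ≤ (n:ℝ) := by positivity
      calc ((wt A : ℕ) : ℝ) ≤ _ + _ := step1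
      _ ≤ (((E:ℝ) + (α:ℝ)*(n':ℝ)) * hf b c d n'
            + (n:ℝ) * ((α:ℝ) * ((u' - 1 : ℕ) : ℝ)))
          + ((n:ℝ) + (n':ℝ)) * hf b c d n' := by
            have := le_trans step2 (le_of_eq step3)
            linarith [hleft]
      _ ≤ (((E:ℝ) + (n:ℝ)) * hf b c d n' + (n:ℝ) * hf b c d n')
          + ((n:ℝ) + (n:ℝ)) * hf b c d n' := by
            have b1 : ((E:ℝ) + (α:ℝ)*(n':ℝ)) * hf b c d n' ≤ ((E:ℝ) + (n:ℝ)) * hf b c d n' := by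
              apply mul_le_mul_of_nonneg_right _ hHspos.le
              linarith
            have b2 : (n:ℝ) * ((α:ℝ) * ((u' - 1 : ℕ) : ℝ)) ≤ (n:ℝ) * hf b c d n' :=
              mul_le_mul_of_nonneg_left hcu hnn
            have b3 : ((n:ℝ) + (n':ℝ)) * hf b c d n' ≤ ((n:ℝ) + (n:ℝ)) * hf b c d n' := by
              apply mul_le_mul_of_nonneg_right _ hHspos.le
              linarith
            linarith
      _ = ((E : ℝ) + 4*(n:ℝ)) * hf b c d n' := by ring
    have hchain : (6*(k:ℝ)*(n:ℝ)) * hf b c d n' < ((E:ℝ) + 4*(n:ℝ)) * hf b c d n' := by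
      have c1 : (n:ℝ) * (6*(k:ℝ) * hf b c d n') ≤ (n:ℝ) * hf b c d n :=
        mul_le_mul_of_nonneg_left hkey (by positivity)
      have c2 : (6*(k:ℝ)*(n:ℝ)) * hf b c d n' = (n:ℝ) * (6*(k:ℝ) * hf b c d n') := by ring
      rw [c2]
      calc (n:ℝ) * (6*(k:ℝ) * hf b c d n') ≤ (n:ℝ) * hf b c d n := c1
      _ < (wt A : ℝ) := hw
      _ ≤ _ := hglobal
    have h7 : 6*(k:ℝ)*(n:ℝ) < (E:ℝ) + 4*(n:ℝ) := lt_of_mul_lt_mul_right hchain hHspos.le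
    have hkR : (2:ℝ) ≤ (k:ℝ) := by exact_mod_cast hk
    have hnn : (0:ℝ) ≤ (n:ℝ) := by positivity
    have hkn : (n:ℝ) ≤ (k:ℝ)*(n:ℝ) := by nlinarith
    have h8 : ((k*n + n : ℕ) : ℝ) < (E:ℝ) := by
      push_cast
      nlinarith
    have h9 : k*n + n < E := by exact_mod_cast h8
    omega
  -- switch to per-row good sets
  have hEG : ∑ i : Fin n, ((Finset.range α).filter (fun j => u' ≤ scntA A n' (j*n') i)).card
      = ∑ j ∈ Finset.range α, (Finset.univ.filter
          (fun i : Fin n => u' ≤ scntA A n' (j*n') i)).card := by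
    classical
    simp only [Finset.card_filter]
    rw [Finset.sum_comm]
  have hchoose : n + 1 ≤ ∑ i : Fin n,
      (((Finset.range α).filter (fun j => u' ≤ scntA A n' (j*n') i)).card.choose k) := by
    classical
    set g : Fin n → ℕ := fun i =>
      ((Finset.range α).filter (fun j => u' ≤ scntA A n' (j*n') i)).card with hg
    have h1 : ∀ i : Fin n, g i - (k-1) ≤ (g i).choose k := fun i => choose_lb k (by omega) (g i)
    have h2 : ∑ i : Fin n, (g i - (k-1)) ≤ ∑ i : Fin n, (g i).choose k :=
      Finset.sum_le_sum (fun i _ => h1 i)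
    have h3 : ∑ i : Fin n, g i ≤ ∑ i : Fin n, (g i - (k-1)) + n*(k-1) := by
      calc ∑ i : Fin n, g i ≤ ∑ i : Fin n, ((g i - (k-1)) + (k-1)) :=
        Finset.sum_le_sum (fun i _ => by omega)
      _ = ∑ i : Fin n, (g i - (k-1)) + n*(k-1) := by
          rw [Finset.sum_add_distrib, Finset.sum_const, Finset.card_univ, Fintype.card_fin,
            smul_eq_mul]
    have h4 : n*(k-1) + (n+1) ≤ ∑ i : Fin n, g i := by
      obtain ⟨k1, rfl⟩ : ∃ k1, k = k1+1 := ⟨k-1, by omega⟩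
      have e1 : n*(k1+1-1) = n*k1 := by norm_num
      have e2 : (k1+1)*n + n + 1 = n*k1 + (2*n+1) := by ring
      rw [e1]
      have h5 : ∑ i : Fin n, g i = ∑ j ∈ Finset.range α, (Finset.univ.filter
          (fun i : Fin n => u' ≤ scntA A n' (j*n') i)).card := hEG
      rw [h5]
      calc n*k1 + (n+1) ≤ n*k1 + (2*n+1) := by omega
      _ = (k1+1)*n + n + 1 := e2.symm
      _ ≤ _ := hEnat
    have h6 : n*(k-1) + (n+1) ≤ ∑ i : Fin n, (g i - (k-1)) + n*(k-1) := le_trans h4 h3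
    have h7 : n + 1 ≤ ∑ i : Fin n, (g i - (k-1)) := by omega
    exact le_trans h7 h2
  have hmC : (m' - 1) * (α.choose k) ≤ n := by
    have hα0 : (0:ℝ) < (α:ℝ) := by exact_mod_cast hαpos
    have hαk0 : (0:ℝ) < (α:ℝ)^k := by positivity
    have hy : (0:ℝ) < (n:ℝ)/(α:ℝ)^k := by positivity
    have hm'1 : 1 ≤ m' := by
      rw [hm'def]
      exact Nat.ceil_pos.mpr hy
    have hm1 : ((m' - 1 : ℕ) : ℝ) < (n:ℝ)/(α:ℝ)^k := by
      have h1 : ((m':ℕ):ℝ) < (n:ℝ)/(α:ℝ)^k + 1 := by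
        rw [hm'def]
        exact Nat.ceil_lt_add_one hy.le
      have h2 : ((m'-1 : ℕ):ℝ) = (m':ℝ) - 1 := by
        push_cast [hm'1]
        ring
      rw [h2]
      linarith
    have hC2 : 2 * (α.choose k) ≤ α^k := by
      have hd1 : k.factorial * α.choose k = α.descFactorial k :=
        (Nat.descFactorial_eq_factorial_mul_choose α k).symm
      have hd2 : α.descFactorial k ≤ α^k := Nat.descFactorial_le_pow α k
      have hd3 : 2 ≤ k.factorial := le_trans hk (Nat.self_le_factorial k)
      calc 2 * (α.choose k) ≤ k.factorial * (α.choose k) :=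
        Nat.mul_le_mul_right _ hd3
      _ = α.descFactorial k := hd1
      _ ≤ α^k := hd2
    have hCpos : 0 < α.choose k := Nat.choose_pos hαk
    have hfin : (((m' - 1) * (α.choose k) : ℕ) : ℝ) < (n:ℝ) := by
      have hCle : ((α.choose k : ℕ):ℝ) ≤ (α:ℝ)^k/2 := by
        have : ((2 * (α.choose k) : ℕ) : ℝ) ≤ (((α^k : ℕ)) : ℝ) := by exact_mod_cast hC2
        push_cast at this
        linarith
      have hm10 : (0:ℝ) ≤ ((m' - 1 : ℕ):ℝ) := by positivity
      have hhalf : (0:ℝ) < (α:ℝ)^k/2 := by positivity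
      calc (((m' - 1) * (α.choose k) : ℕ) : ℝ)
          = ((m' - 1 : ℕ):ℝ) * ((α.choose k : ℕ):ℝ) := by push_cast; ring
      _ ≤ ((m' - 1 : ℕ):ℝ) * ((α:ℝ)^k/2) := mul_le_mul_of_nonneg_left hCle hm10
      _ < ((n:ℝ)/(α:ℝ)^k) * ((α:ℝ)^k/2) := mul_lt_mul_of_pos_right hm1 hhalf
      _ = (n:ℝ)/2 := by field_simp
      _ ≤ (n:ℝ) := by
          have : (0:ℝ) ≤ (n:ℝ) := by positivity
          linarith
    have := Nat.cast_lt.mp (lt_of_lt_of_le hfin (le_refl ((n:ℕ):ℝ)))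
    omega
  -- pigeonhole
  have hswap : ∑ T ∈ (Finset.range α).powersetCard k,
      (Finset.univ.filter (fun i : Fin n =>
        T ⊆ (Finset.range α).filter (fun j => u' ≤ scntA A n' (j*n') i))).card
      = ∑ i : Fin n,
        (((Finset.range α).filter (fun j => u' ≤ scntA A n' (j*n') i)).card.choose k) := by
    classical
    simp only [Finset.card_filter]
    rw [Finset.sum_comm]
    apply Finset.sum_congr rfl
    intro i _
    rw [← Finset.card_filter]
    have heq : ((Finset.range α).powersetCard k).filter
        (fun T => T ⊆ (Finset.range α).filter (fun j => u' ≤ scntA A n' (j*n') i))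
        = ((Finset.range α).filter (fun j => u' ≤ scntA A n' (j*n') i)).powersetCard k := by
      ext T
      simp only [Finset.mem_filter, Finset.mem_powersetCard]
      constructor
      · rintro ⟨⟨_, hcard⟩, hsub⟩
        exact ⟨hsub, hcard⟩
      · rintro ⟨hsub, hcard⟩
        exact ⟨⟨le_trans hsub (Finset.filter_subset _ _), hcard⟩, hsub⟩
    rw [heq, Finset.card_powersetCard, Finset.card_filter]
  have hlt : ∑ _T ∈ (Finset.range α).powersetCard k, (m' - 1)
      < ∑ T ∈ (Finset.range α).powersetCard k,
        (Finset.univ.filter (fun i : Fin n =>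
          T ⊆ (Finset.range α).filter (fun j => u' ≤ scntA A n' (j*n') i))).card := by
    rw [hswap, Finset.sum_const, Finset.card_powersetCard, Finset.card_range, smul_eq_mul]
    calc α.choose k * (m'-1) = (m'-1) * α.choose k := mul_comm _ _
    _ ≤ n := hmC
    _ < n + 1 := by omega
    _ ≤ _ := hchoose
  obtain ⟨T, hTmem, hTlt⟩ := Finset.exists_lt_of_sum_lt hlt
  obtain ⟨hTsub, hTcard⟩ := Finset.mem_powersetCard.mp hTmem
  have hIcard : m' ≤ (Finset.univ.filter (fun i : Fin n =>
      T ⊆ (Finset.range α).filter (fun j => u' ≤ scntA A n' (j*n') i))).card := by omega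
  obtain ⟨I', hI'sub, hI'card⟩ := Finset.exists_subset_card_eq hIcard
  -- construction
  classical
  have hmemα : ∀ a : Fin k, ((T.orderIsoOfFin hTcard a : ℕ)) < α := by
    intro a
    have := (T.orderIsoOfFin hTcard a).2
    exact Finset.mem_range.mp (hTsub this)
  have htle : ∀ a : Fin k, ((T.orderIsoOfFin hTcard a : ℕ)) * n' + n' ≤ n := by
    intro a
    have h1 := hmemα a
    have h2 : ((T.orderIsoOfFin hTcard a : ℕ) + 1) * n' ≤ α * n' :=
      Nat.mul_le_mul_right n' (by omega)
    have h3 : ((T.orderIsoOfFin hTcard a : ℕ) + 1) * n'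
        = (T.orderIsoOfFin hTcard a : ℕ) * n' + n' := by ring
    omega
  refine ⟨fun a => ((I'.orderIsoOfFin hI'card a : Fin n)), ?_,
    fun a => ((T.orderIsoOfFin hTcard a : ℕ)) * n', htle, ?_, ?_⟩
  · intro a b' hab
    exact (I'.orderIsoOfFin hI'card).strictMono hab
  · intro j₁ j₂ hj
    have h1 : ((T.orderIsoOfFin hTcard j₁ : ℕ)) < ((T.orderIsoOfFin hTcard j₂ : ℕ)) :=
      (T.orderIsoOfFin hTcard).strictMono hj
    exact le_trans (le_of_eq (add_one_mul ((T.orderIsoOfFin hTcard j₁ : ℕ)) n').symm)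
      (Nat.mul_le_mul_right n' (by omega))
  · intro i a
    have hrow : ((I'.orderIsoOfFin hI'card i : Fin n)) ∈ I' := (I'.orderIsoOfFin hI'card i).2
    have hI := hI'sub hrow
    simp only [Finset.mem_filter, Finset.mem_univ, true_and] at hI
    have hjT : ((T.orderIsoOfFin hTcard a : ℕ)) ∈ T := (T.orderIsoOfFin hTcard a).2
    have hjG := hI hjT
    simp only [Finset.mem_filter, Finset.mem_range] at hjG
    have hcnt := hjG.2
    have heq := scnt_eq A (m := n') (s := (T.orderIsoOfFin hTcard a : ℕ) * n')
      ((I'.orderIsoOfFin hI'card i : Fin n)) (htle a)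
      (fun cc => ⟨(T.orderIsoOfFin hTcard a : ℕ) * n' + (cc : ℕ), by
        have := cc.isLt; have := htle a; omega⟩)
      (fun cc => rfl)
    rw [heq] at hcnt
    exact hcnt
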